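/- Let b, c be positive integers with b ≤ c, c = bd + e, 0 ≤ e < b, and let Q_{b,c}(x_1,y_1,x_2,y_2) = ((x_1^b y_2 + y_1^b x_2)^{d+1} − (x_1^b y_2)^{d+1} − (y_1^b x_2)^{d+1}) / (x_1^{b−e} y_1^{b−e}). Then for any commutative ℚ-algebra B, the operation on B^3 given by (x_1,x_2,x_3)*(y_1,y_2,y_3) = (x_1y_1, x_1^b y_2 + y_1^b x_2, x_1^c y_3 + y_1^c x_3 + Q_{b,c}(x_1,y_1,x_2,y_2)) is associative and commutative with identity (1, 0, 0). -/

import Mathlib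

open MvPolynomial

private lemma stmt5_aeval_push {n : ℕ} {S : Type} [CommRing S] (Q : MvPolynomial (Fin 4) ℤ)
    (φ : MvPolynomial (Fin n) ℤ →ₐ[ℤ] S) (g : Fin 4 → MvPolynomial (Fin n) ℤ)
    (v : Fin 4 → S) (hv : ∀ i, φ (g i) = v i) :
    φ (aeval g Q) = aeval v Q := by
  have h := DFunLike.congr_fun (comp_aeval g φ) Q
  simp only [AlgHom.comp_apply] at h
  rw [h, funext hv]

private lemma stmt5_key (e f d : ℕ) (Q : MvPolynomial (Fin 4) ℤ)
    (hQ : (X 0 ^ f * X 1 ^ f : MvPolynomial (Fin 4) ℤ) * Q =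
      (X 0 ^ (e+f) * X 3 + X 1 ^ (e+f) * X 2) ^ (d + 1)
        - (X 0 ^ (e+f) * X 3) ^ (d + 1) - (X 1 ^ (e+f) * X 2) ^ (d + 1))
    {S : Type} [CommRing S] [Algebra ℤ S] (α β γ δ : S) :
    (α*β)^f * (aeval (R := ℤ) ![α,β,γ,δ] Q) =
      (α^(e+f)*δ + β^(e+f)*γ)^(d+1) - (α^(e+f)*δ)^(d+1) - (β^(e+f)*γ)^(d+1) := by
  have h := congrArg (aeval (R := ℤ) ![α,β,γ,δ]) hQ
  simp only [map_mul, map_pow, map_sub, map_add, aeval_X, Matrix.cons_val_zero,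
    Matrix.cons_val_one, Matrix.head_cons, Matrix.cons_val_two, Matrix.tail_cons,
    Matrix.cons_val_three, Matrix.head_fin_const] at h
  linear_combination h

private lemma stmt5_Uassoc (e f d : ℕ) (Q : MvPolynomial (Fin 4) ℤ)
    (hQ : (X 0 ^ f * X 1 ^ f : MvPolynomial (Fin 4) ℤ) * Q =
      (X 0 ^ (e+f) * X 3 + X 1 ^ (e+f) * X 2) ^ (d + 1)
        - (X 0 ^ (e+f) * X 3) ^ (d + 1) - (X 1 ^ (e+f) * X 2) ^ (d + 1)) :
    (X 2 : MvPolynomial (Fin 6) ℤ)^((e+f)*d+e) * aeval ![X 0, X 1, X 3, X 4] Q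
      + aeval ![X 0 * X 1, X 2, (X 0:MvPolynomial (Fin 6) ℤ)^(e+f) * X 4 + X 1^(e+f) * X 3, X 5] Q
    = (X 0 : MvPolynomial (Fin 6) ℤ)^((e+f)*d+e) * aeval ![X 1, X 2, X 4, X 5] Q
      + aeval ![X 0, X 1 * X 2, X 3, (X 1:MvPolynomial (Fin 6) ℤ)^(e+f) * X 5 + X 2^(e+f) * X 4] Q := by
  set a := (X 0 : MvPolynomial (Fin 6) ℤ)
  set b₁ := (X 1 : MvPolynomial (Fin 6) ℤ)
  set c₁ := (X 2 : MvPolynomial (Fin 6) ℤ)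
  set u := (X 3 : MvPolynomial (Fin 6) ℤ)
  set v := (X 4 : MvPolynomial (Fin 6) ℤ)
  set w := (X 5 : MvPolynomial (Fin 6) ℤ)
  apply mul_left_cancel₀ (a := (a * b₁ * c₁)^f)
  · exact pow_ne_zero _ (by simp [a, b₁, c₁, X_ne_zero, mul_ne_zero])
  have k1 := stmt5_key e f d Q hQ a b₁ u v
  have k2 := stmt5_key e f d Q hQ (a*b₁) c₁ (a^(e+f)*v + b₁^(e+f)*u) w
  have k3 := stmt5_key e f d Q hQ b₁ c₁ v w
  have k4 := stmt5_key e f d Q hQ a (b₁*c₁) u (b₁^(e+f)*w + c₁^(e+f)*v)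
  have hb1 : c₁^((e+f)*(d+1)) * (a^(e+f)*v + b₁^(e+f)*u)^(d+1)
      = (c₁^(e+f) * (a^(e+f)*v + b₁^(e+f)*u))^(d+1) := by
    rw [pow_mul, ← mul_pow]
  have hb2 : a^((e+f)*(d+1)) * (b₁^(e+f)*w + c₁^(e+f)*v)^(d+1)
      = (a^(e+f) * (b₁^(e+f)*w + c₁^(e+f)*v))^(d+1) := by
    rw [pow_mul, ← mul_pow]
  linear_combination (c₁^(f+((e+f)*d+e))) * k1 + k2 - (a^(f+((e+f)*d+e))) * k3 - k4 + hb1 - hb2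

private lemma stmt5_Ucomm (e f d : ℕ) (Q : MvPolynomial (Fin 4) ℤ)
    (hQ : (X 0 ^ f * X 1 ^ f : MvPolynomial (Fin 4) ℤ) * Q =
      (X 0 ^ (e+f) * X 3 + X 1 ^ (e+f) * X 2) ^ (d + 1)
        - (X 0 ^ (e+f) * X 3) ^ (d + 1) - (X 1 ^ (e+f) * X 2) ^ (d + 1)) :
    aeval (R := ℤ) ![(X 1 : MvPolynomial (Fin 4) ℤ), X 0, X 3, X 2] Q = Q := by
  apply mul_left_cancel₀ (a := ((X 1 : MvPolynomial (Fin 4) ℤ) * X 0)^f)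
  · exact pow_ne_zero _ (mul_ne_zero (X_ne_zero _) (X_ne_zero _))
  have k := stmt5_key e f d Q hQ (X 1 : MvPolynomial (Fin 4) ℤ) (X 0) (X 3) (X 2)
  linear_combination k - hQ

private lemma stmt5_Uunit (e f d : ℕ) (Q : MvPolynomial (Fin 4) ℤ)
    (hQ : (X 0 ^ f * X 1 ^ f : MvPolynomial (Fin 4) ℤ) * Q =
      (X 0 ^ (e+f) * X 3 + X 1 ^ (e+f) * X 2) ^ (d + 1)
        - (X 0 ^ (e+f) * X 3) ^ (d + 1) - (X 1 ^ (e+f) * X 2) ^ (d + 1)) :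
    aeval (R := ℤ) ![(1 : MvPolynomial (Fin 4) ℤ), X 1, 0, X 3] Q = 0 := by
  apply mul_left_cancel₀ (a := ((1 : MvPolynomial (Fin 4) ℤ) * X 1)^f)
  · exact pow_ne_zero _ (by simp [X_ne_zero])
  have k := stmt5_key e f d Q hQ (1 : MvPolynomial (Fin 4) ℤ) (X 1) 0 (X 3)
  rw [k]
  simp

open MvPolynomial in
theorem stmt_5 (b c d e : ℕ) (hb : 0 < b) (hbc : b ≤ c) (hc : c = b * d + e) (he : e < b)
    (Q : MvPolynomial (Fin 4) ℤ)
    (hQ : (X 0 ^ (b - e) * X 1 ^ (b - e) : MvPolynomial (Fin 4) ℤ) * Q =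
      (X 0 ^ b * X 3 + X 1 ^ b * X 2) ^ (d + 1)
        - (X 0 ^ b * X 3) ^ (d + 1) - (X 1 ^ b * X 2) ^ (d + 1))
    (B : Type) [CommRing B] [Algebra ℚ B]
    (mul : (B × B × B) → (B × B × B) → (B × B × B))
    (hmul : ∀ x y, mul x y =
      (x.1 * y.1,
       x.1 ^ b * y.2.1 + y.1 ^ b * x.2.1,
       x.1 ^ c * y.2.2 + y.1 ^ c * x.2.2 +
         MvPolynomial.aeval (R := ℤ) ![x.1, y.1, x.2.1, y.2.1] Q)) :
    (∀ x y z, mul (mul x y) z = mul x (mul y z)) ∧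
    (∀ x y, mul x y = mul y x) ∧
    (∀ x, mul (1, 0, 0) x = x) ∧ (∀ x, mul x (1, 0, 0) = x) := by
  obtain ⟨f, rfl⟩ : ∃ f, b = e + f := ⟨b - e, by omega⟩
  subst hc
  rw [show e + f - e = f by omega] at hQ
  -- transfer the universal identities to B
  have qcomm : ∀ x₁ y₁ x₂ y₂ : B,
      aeval (R := ℤ) ![y₁, x₁, y₂, x₂] Q = aeval (R := ℤ) ![x₁, y₁, x₂, y₂] Q := by
    intro x₁ y₁ x₂ y₂
    have h := congrArg (aeval (R := ℤ) ![x₁, y₁, x₂, y₂]) (stmt5_Ucomm e f d Q hQ)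
    rwa [stmt5_aeval_push Q _ _ ![y₁, x₁, y₂, x₂] (by intro i; fin_cases i <;> simp <;> rfl)] at h
  have qunit : ∀ t s : B, aeval (R := ℤ) ![(1:B), t, 0, s] Q = 0 := by
    intro t s
    have h := congrArg (aeval (R := ℤ) ![t, t, s, s]) (stmt5_Uunit e f d Q hQ)
    rwa [stmt5_aeval_push Q _ _ ![(1:B), t, 0, s] (by intro i; fin_cases i <;> simp <;> rfl),
      map_zero] at h
  have qassoc : ∀ x₁ y₁ z₁ x₂ y₂ z₂ : B,
      z₁^((e+f)*d+e) * aeval (R := ℤ) ![x₁, y₁, x₂, y₂] Q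
        + aeval (R := ℤ) ![x₁ * y₁, z₁, x₁^(e+f) * y₂ + y₁^(e+f) * x₂, z₂] Q
      = x₁^((e+f)*d+e) * aeval (R := ℤ) ![y₁, z₁, y₂, z₂] Q
        + aeval (R := ℤ) ![x₁, y₁ * z₁, x₂, y₁^(e+f) * z₂ + z₁^(e+f) * y₂] Q := by
    intro x₁ y₁ z₁ x₂ y₂ z₂
    have h := congrArg (aeval (R := ℤ) ![x₁, y₁, z₁, x₂, y₂, z₂]) (stmt5_Uassoc e f d Q hQ)
    rw [map_add, map_add, map_mul, map_mul, map_pow, map_pow,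
      stmt5_aeval_push Q _ _ ![x₁, y₁, x₂, y₂] (by intro i; fin_cases i <;> simp <;> rfl),
      stmt5_aeval_push Q _ _ ![x₁ * y₁, z₁, x₁^(e+f) * y₂ + y₁^(e+f) * x₂, z₂]
        (by intro i; fin_cases i <;> simp <;> rfl),
      stmt5_aeval_push Q _ _ ![y₁, z₁, y₂, z₂] (by intro i; fin_cases i <;> simp <;> rfl),
      stmt5_aeval_push Q _ _ ![x₁, y₁ * z₁, x₂, y₁^(e+f) * z₂ + z₁^(e+f) * y₂]
        (by intro i; fin_cases i <;> simp <;> rfl), aeval_X, aeval_X] at h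
    simpa using h
  have hcomm : ∀ x y, mul x y = mul y x := by
    intro x y
    rw [hmul, hmul]
    simp only [Prod.mk.injEq]
    exact ⟨by ring, by ring, by linear_combination qcomm y.1 x.1 y.2.1 x.2.1⟩
  have hlunit : ∀ x, mul (1, 0, 0) x = x := by
    intro x
    obtain ⟨a1, a2, a3⟩ := x
    rw [hmul]
    exact Prod.ext (by simp) (Prod.ext (by simp) (by simp [qunit a1 a2]))
  have hassoc : ∀ x y z, mul (mul x y) z = mul x (mul y z) := by
    intro x y z
    obtain ⟨a1, a2, a3⟩ := x
    obtain ⟨b1, b2, b3⟩ := y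
    obtain ⟨c1, c2, c3⟩ := z
    simp only [hmul]
    simp only [Prod.mk.injEq]
    refine ⟨by ring, by ring, ?_⟩
    linear_combination qassoc a1 b1 c1 a2 b2 c2
  exact ⟨hassoc, hcomm, hlunit, fun x => (hcomm x _).trans (hlunit x)⟩
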